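/- If (X, τ) is a locally connected topological space, then X equipped with the topology *O(X) of *-open sets is locally connected. -/

import Mathlib

open Set TopologicalSpace

def RegOpen (X : Type*) [TopologicalSpace X] (U : Set X) : Prop :=
  interior (closure U) = U

def starInt (X : Type*) [TopologicalSpace X] (A : Set X) : Set X :=
  {x | x ∈ A ∧ ∃ W, RegOpen X W ∧ x ∈ W ∧ W ⊆ A}

def starCl (X : Type*) [TopologicalSpace X] (A : Set X) : Set X :=
  {x | ∀ W, RegOpen X W → x ∈ W → (W ∩ A).Nonempty}

def StarOpen (X : Type*) [TopologicalSpace X] (A : Set X) : Prop :=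
  ∀ x ∈ A, ∃ W, RegOpen X W ∧ x ∈ W ∧ W ⊆ A

def starTop (X : Type*) [TopologicalSpace X] : TopologicalSpace X :=
  TopologicalSpace.generateFrom {A | StarOpen X A}

def StarContinuous {X Y : Type*} [TopologicalSpace X] [TopologicalSpace Y] (f : X → Y) : Prop :=
  ∀ A : Set Y, StarOpen Y A → StarOpen X (f ⁻¹' A)

lemma regOpen_isOpen {X : Type*} [TopologicalSpace X] {U : Set X} (h : RegOpen X U) :
    IsOpen U := h ▸ isOpen_interior

lemma starOpen_isOpen {X : Type*} [TopologicalSpace X] {A : Set X} (h : StarOpen X A) :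
    IsOpen A := by
  refine isOpen_iff_forall_mem_open.2 fun x hx => ?_
  obtain ⟨W, hW, hxW, hWA⟩ := h x hx
  exact ⟨W, hWA, regOpen_isOpen hW, hxW⟩

lemma starTop_le {X : Type*} [t : TopologicalSpace X] : t ≤ starTop X :=
  le_generateFrom fun _ hA => starOpen_isOpen hA

lemma regOpen_inter {X : Type*} [TopologicalSpace X] {U V : Set X}
    (hU : RegOpen X U) (hV : RegOpen X V) : RegOpen X (U ∩ V) := by
  apply subset_antisymm
  · intro x hx
    exact ⟨hU ▸ interior_mono (closure_mono inter_subset_left) hx,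
      hV ▸ interior_mono (closure_mono inter_subset_right) hx⟩
  · exact interior_maximal subset_closure ((regOpen_isOpen hU).inter (regOpen_isOpen hV))

lemma generateOpen_starOpen {X : Type*} [TopologicalSpace X] {A : Set X}
    (h : TopologicalSpace.GenerateOpen {A | StarOpen X A} A) : StarOpen X A := by
  induction h with
  | basic s hs => exact hs
  | univ =>
    intro x _
    exact ⟨univ, by simp [RegOpen], trivial, subset_rfl⟩
  | inter s t _ _ hs ht =>
    intro x hx
    obtain ⟨W1, hW1, hx1, h1⟩ := hs x hx.1
    obtain ⟨W2, hW2, hx2, h2⟩ := ht x hx.2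
    exact ⟨W1 ∩ W2, regOpen_inter hW1 hW2, ⟨hx1, hx2⟩,
      fun y hy => ⟨h1 hy.1, h2 hy.2⟩⟩
  | sUnion S _ hS =>
    intro x hx
    obtain ⟨s, hsS, hxs⟩ := hx
    obtain ⟨W, hW, hxW, hWs⟩ := hS s hsS x hxs
    exact ⟨W, hW, hxW, hWs.trans (subset_sUnion_of_mem hsS)⟩

lemma regOpen_component {X : Type*} [TopologicalSpace X] [LocallyConnectedSpace X]
    {W : Set X} (hW : RegOpen X W) {x : X} (hx : x ∈ W) :
    RegOpen X (connectedComponentIn W x) := by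
  set D := connectedComponentIn W x with hDdef
  have hWo := regOpen_isOpen hW
  have hD : IsOpen D := hWo.connectedComponentIn
  have hDW : D ⊆ W := connectedComponentIn_subset W x
  have hsub : D ⊆ interior (closure D) := interior_maximal subset_closure hD
  have h1 : interior (closure D) ⊆ W := by
    calc interior (closure D) ⊆ interior (closure W) :=
      interior_mono (closure_mono hDW)
    _ = W := hW
  have hpre : IsPreconnected (interior (closure D)) :=
    (isPreconnected_connectedComponentIn).subset_closure hsub interior_subset
  have hxD : x ∈ D := mem_connectedComponentIn hx
  have h2 : interior (closure D) ⊆ D :=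
    hpre.subset_connectedComponentIn (hsub hxD) h1
  exact subset_antisymm h2 hsub

theorem stmt17 {X : Type*} [TopologicalSpace X] (h : LocallyConnectedSpace X) :
    @LocallyConnectedSpace X (starTop X) := by
  rw [@locallyConnectedSpace_iff_subsets_isOpen_isConnected X (starTop X)]
  intro x U hU
  obtain ⟨O, hOU, hO, hxO⟩ := (@mem_nhds_iff X (starTop X) x U).1 hU
  have hOstar : StarOpen X O := generateOpen_starOpen hO
  obtain ⟨W, hW, hxW, hWO⟩ := hOstar x hxO
  set D := connectedComponentIn W x with hDdef
  have hDreg : RegOpen X D := regOpen_component hW hxW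
  have hDstar : StarOpen X D := fun y hy => ⟨D, hDreg, hy, subset_rfl⟩
  refine ⟨D, (connectedComponentIn_subset W x).trans (hWO.trans hOU),
    TopologicalSpace.GenerateOpen.basic D hDstar, mem_connectedComponentIn hxW, ?_⟩
  have hconn : IsConnected D := isConnected_connectedComponentIn_iff.2 hxW
  have cont : @Continuous X X _ (starTop X) id := continuous_id_of_le starTop_le
  refine ⟨hconn.nonempty, ?_⟩
  have := @IsPreconnected.image X X _ (starTop X) D hconn.isPreconnected id
    (@Continuous.continuousOn X X _ (starTop X) id D cont)
  rwa [image_id] at this
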